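/- Let n ≥ 2, ω = exp(2πi/n), and for an integer k define Δ_k(x) = Σ_{l=1}^{n−1} ((1 − ω^{−kl})/(1 − ω^{−l})) · x^l for a complex number x. Then for every k with 1 ≤ k ≤ n−1 and all x, y ∈ {1, ω, ω², …, ω^{n−1}}, the quantity Δ_k(x, y) := Δ_k(x) + Δ_{−k}(y) takes one of the values n, 0, or −n; in particular Δ_k(x, y)³ = n² · Δ_k(x, y). -/

import Mathlib

private lemma sum_root_pow (n : ℕ) (hn : 1 ≤ n) (ζ : ℂ) (hζ : ζ ^ n = 1) :
    ∑ l ∈ Finset.Icc 1 (n - 1), ζ ^ l = if ζ = 1 then (n : ℂ) - 1 else -1 := by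
  have hset : Finset.Icc 1 (n - 1) = (Finset.range n).erase 0 := by
    ext l
    simp only [Finset.mem_Icc, Finset.mem_erase, Finset.mem_range]
    omega
  have h0 : (0 : ℕ) ∈ Finset.range n := by exact Finset.mem_range.mpr hn
  rw [hset, Finset.sum_erase_eq_sub h0, pow_zero]
  by_cases h1 : ζ = 1
  · subst h1; simp
  · rw [if_neg h1, geom_sum_eq h1, hζ]
    simp

private lemma nat_dvd_char {n m : ℕ} (h1 : 0 < m) (h2 : m < 2 * n) (hd : n ∣ m) :
    m = n := by
  obtain ⟨c, rfl⟩ := hd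
  have hc2 : c < 2 := by
    by_contra hcge
    push_neg at hcge
    have : n * 2 ≤ n * c := Nat.mul_le_mul_left n hcge
    omega
  interval_cases c <;> omega

private lemma delta_pos_val (n k s : ℕ) (hn : 2 ≤ n) (hk1 : 1 ≤ k) (hk : k ≤ n - 1)
    (hs : s ≤ n - 1) (ω : ℂ) (hprim : IsPrimitiveRoot ω n) :
    ∑ l ∈ Finset.Icc 1 (n - 1),
      ((1 - ω ^ (-((k : ℤ) * (l : ℤ)))) / (1 - ω ^ (-(l : ℤ)))) * ((ω ^ s) ^ l)
      = (if s < k then (n : ℂ) else 0) - k := by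
  have hω0 : ω ≠ 0 := hprim.ne_zero (by omega)
  have key : ∀ l ∈ Finset.Icc 1 (n - 1),
      ((1 - ω ^ (-((k : ℤ) * (l : ℤ)))) / (1 - ω ^ (-(l : ℤ)))) * ((ω ^ s) ^ l)
      = ∑ j ∈ Finset.range k, (ω ^ ((s : ℤ) - j)) ^ l := by
    intro l hl
    rw [Finset.mem_Icc] at hl
    set r := ω ^ (-(l : ℤ)) with hr
    have hr1 : r ≠ 1 := by
      intro h
      have hd := (hprim.zpow_eq_one_iff_dvd (-(l : ℤ))).mp h
      rw [Int.dvd_neg, Int.natCast_dvd_natCast] at hd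
      have := Nat.le_of_dvd (by omega) hd
      omega
    have hpow : ω ^ (-((k : ℤ) * (l : ℤ))) = r ^ k := by
      rw [hr, ← zpow_natCast (ω ^ (-(l : ℤ))) k, ← zpow_mul]
      congr 1; ring
    have hco : (1 - ω ^ (-((k : ℤ) * (l : ℤ)))) / (1 - r) = ∑ j ∈ Finset.range k, r ^ j := by
      rw [hpow, geom_sum_eq hr1, ← neg_div_neg_eq, neg_sub, neg_sub]
    rw [hco, Finset.sum_mul]
    refine Finset.sum_congr rfl fun j hj => ?_
    rw [hr]
    rw [← zpow_natCast (ω ^ (-(l : ℤ))) j, ← zpow_mul, ← zpow_natCast ω s,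
      ← zpow_natCast (ω ^ (s : ℤ)) l, ← zpow_mul,
      ← zpow_add₀ hω0, ← zpow_natCast (ω ^ ((s : ℤ) - j)) l, ← zpow_mul]
    congr 1; ring
  rw [Finset.sum_congr rfl key, Finset.sum_comm]
  have keyj : ∀ j ∈ Finset.range k,
      ∑ l ∈ Finset.Icc 1 (n - 1), (ω ^ ((s : ℤ) - j)) ^ l
        = if j = s then (n : ℂ) - 1 else -1 := by
    intro j hj
    rw [Finset.mem_range] at hj
    have hζn : (ω ^ ((s : ℤ) - j)) ^ n = 1 := by
      rw [← zpow_natCast (ω ^ ((s : ℤ) - j)) n, ← zpow_mul, mul_comm, zpow_mul,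
        zpow_natCast, hprim.pow_eq_one, one_zpow]
    rw [sum_root_pow n (by omega) _ hζn]
    congr 1
    simp only [eq_iff_iff]
    rw [hprim.zpow_eq_one_iff_dvd]
    constructor
    · intro hd
      have := Int.eq_zero_of_abs_lt_dvd hd (by
        rw [abs_lt]; constructor <;> [push_cast; push_cast] <;> omega)
      omega
    · intro h; subst h; simp
  rw [Finset.sum_congr rfl keyj]
  have : ∀ j : ℕ, (if j = s then (n : ℂ) - 1 else -1)
      = (if j = s then (n : ℂ) else 0) - 1 := by
    intro j; split <;> ring
  simp only [this]
  rw [Finset.sum_sub_distrib, Finset.sum_const, Finset.card_range,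
    Finset.sum_ite_eq']
  simp [Finset.mem_range]

private lemma delta_neg_val (n k t : ℕ) (hn : 2 ≤ n) (hk1 : 1 ≤ k) (hk : k ≤ n - 1)
    (ht : t ≤ n - 1) (ω : ℂ) (hprim : IsPrimitiveRoot ω n) :
    ∑ l ∈ Finset.Icc 1 (n - 1),
      ((1 - ω ^ ((k : ℤ) * (l : ℤ))) / (1 - ω ^ (-(l : ℤ)))) * ((ω ^ t) ^ l)
      = (k : ℂ) - (if n ≤ t + k then (n : ℂ) else 0) := by
  have hω0 : ω ≠ 0 := hprim.ne_zero (by omega)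
  have key : ∀ l ∈ Finset.Icc 1 (n - 1),
      ((1 - ω ^ ((k : ℤ) * (l : ℤ))) / (1 - ω ^ (-(l : ℤ)))) * ((ω ^ t) ^ l)
      = -∑ j ∈ Finset.range k, (ω ^ (t + j + 1)) ^ l := by
    intro l hl
    rw [Finset.mem_Icc] at hl
    set u := ω ^ l with hu
    have hu0 : u ≠ 0 := pow_ne_zero _ hω0
    have hu1 : u ≠ 1 := by
      intro h
      have hd := (hprim.pow_eq_one_iff_dvd l).mp h
      have := Nat.le_of_dvd (by omega) hd
      omega
    have hpow : ω ^ ((k : ℤ) * (l : ℤ)) = u ^ k := by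
      rw [hu, ← pow_mul, ← zpow_natCast ω (l * k)]
      congr 1; push_cast; ring
    have hinv : ω ^ (-(l : ℤ)) = u⁻¹ := by
      rw [zpow_neg, zpow_natCast]
    have hco : (1 - ω ^ ((k : ℤ) * (l : ℤ))) / (1 - ω ^ (-(l : ℤ)))
        = -u * ∑ j ∈ Finset.range k, u ^ j := by
      rw [hpow, hinv, geom_sum_eq hu1]
      have h1 : (1 : ℂ) - u⁻¹ = (u - 1) / u := by
        field_simp
      rw [h1]
      have hden : u - 1 ≠ 0 := sub_ne_zero.mpr hu1
      field_simp
      ring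
    rw [hco, Finset.mul_sum, Finset.sum_mul, ← Finset.sum_neg_distrib]
    refine Finset.sum_congr rfl fun j hj => ?_
    rw [neg_mul, neg_mul, neg_inj, hu]
    simp only [← pow_mul, ← pow_add]
    congr 1; ring
  rw [Finset.sum_congr rfl key, Finset.sum_neg_distrib, Finset.sum_comm]
  have keyj : ∀ j ∈ Finset.range k,
      ∑ l ∈ Finset.Icc 1 (n - 1), (ω ^ (t + j + 1)) ^ l
        = (if j = n - 1 - t then (n : ℂ) - 1 else -1) := by
    intro j hj
    rw [Finset.mem_range] at hj
    have hζn : (ω ^ (t + j + 1)) ^ n = 1 := by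
      rw [← pow_mul, mul_comm, pow_mul, hprim.pow_eq_one, one_pow]
    rw [sum_root_pow n (by omega) _ hζn]
    congr 1
    simp only [eq_iff_iff]
    rw [hprim.pow_eq_one_iff_dvd]
    constructor
    · intro hd
      have := nat_dvd_char (by omega) (by omega) hd
      omega
    · intro h
      have : t + j + 1 = n := by omega
      rw [this]
  rw [Finset.sum_congr rfl keyj]
  have : ∀ j : ℕ, (if j = n - 1 - t then (n : ℂ) - 1 else -1)
      = (if j = n - 1 - t then (n : ℂ) else 0) - 1 := by
    intro j; split <;> ring
  simp only [this]
  rw [Finset.sum_sub_distrib, Finset.sum_const, Finset.card_range,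
    Finset.sum_ite_eq']
  by_cases hc : n ≤ t + k
  · rw [if_pos (by simp only [Finset.mem_range]; omega), if_pos hc]
    simp only [nsmul_eq_mul, mul_one]
    ring
  · rw [if_neg (by simp only [Finset.mem_range]; omega), if_neg hc]
    simp only [nsmul_eq_mul, mul_one]
    ring

/-- the key cubic identity in the proof of Theorem 3 of the
paper.  With `n ≥ 2`, `ω = exp(2πi/n)` and
`Δ_k(x) = Σ_{l=1}^{n−1} ((1 − ω^{−kl})/(1 − ω^{−l})) x^l`, for every `k` with
`1 ≤ k ≤ n−1` and all `x, y` in `{1, ω, ω², …, ω^{n−1}}`, the quantity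
`Δ_k(x, y) := Δ_k(x) + Δ_{−k}(y)` takes one of the values `n`, `0`, `−n`;
in particular `Δ_k(x, y)³ = n² · Δ_k(x, y)`. -/
theorem delta_cubic_identity
    (n : ℕ) (hn : 2 ≤ n)
    (ω : ℂ) (hω : ω = Complex.exp (2 * Real.pi * Complex.I / n))
    (Δ : ℤ → ℂ → ℂ)
    (hΔ : ∀ (k : ℤ) (x : ℂ), Δ k x = ∑ l ∈ Finset.Icc 1 (n - 1),
      ((1 - ω ^ (-(k * (l : ℤ)))) / (1 - ω ^ (-(l : ℤ)))) * x ^ l) :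
    ∀ k : ℕ, 1 ≤ k → k ≤ n - 1 → ∀ x y : ℂ,
      (∃ s : ℕ, s ≤ n - 1 ∧ x = ω ^ s) → (∃ t : ℕ, t ≤ n - 1 ∧ y = ω ^ t) →
      (Δ (k : ℤ) x + Δ (-(k : ℤ)) y = (n : ℂ) ∨
       Δ (k : ℤ) x + Δ (-(k : ℤ)) y = 0 ∨
       Δ (k : ℤ) x + Δ (-(k : ℤ)) y = -(n : ℂ)) ∧
      (Δ (k : ℤ) x + Δ (-(k : ℤ)) y) ^ 3
        = (n : ℂ) ^ 2 * (Δ (k : ℤ) x + Δ (-(k : ℤ)) y) := by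
  have hprim : IsPrimitiveRoot ω n := by
    rw [hω]; exact Complex.isPrimitiveRoot_exp n (by omega)
  rintro k hk1 hk x y ⟨s, hs, rfl⟩ ⟨t, ht, rfl⟩
  rw [hΔ, hΔ]
  simp only [neg_mul, neg_neg]
  rw [delta_pos_val n k s hn hk1 hk hs ω hprim,
    delta_neg_val n k t hn hk1 hk ht ω hprim]
  split_ifs with h1 h2 h2
  · exact ⟨Or.inr (Or.inl (by ring)), by ring⟩
  · exact ⟨Or.inl (by ring), by ring⟩
  · exact ⟨Or.inr (Or.inr (by ring)), by ring⟩
  · exact ⟨Or.inr (Or.inl (by ring)), by ring⟩
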